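/- Suppose M is a d×d symmetric positive definite matrix with ‖M − I_d‖₂ ≤ ε for ε ∈ (0,1), and consider the heavy-ball iteration y^{i+1} = y^i − α M^{-1}(y^i − y*) + β(y^i − y^{i-1}) with β = β* = (ε/(1+√(1−ε²)))² and α = α* = (1−β*)√(1−ε²). Then the eigenvalue condition β* ≥ (1 − √(α* μ))² holds for every eigenvalue μ of M^{-1}. -/

import Mathlib

open scoped Matrix.Norms.L2Operator

/-- with `‖M − I‖₂ ≤ ε` and the optimal momentum parameters `β*, α*`, the
under-damping condition `β* ≥ (1 − √(α* μ))²` holds for every eigenvalue `μ` of `M⁻¹`. -/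
theorem stmt12 {d : ℕ} (M : Matrix (Fin d) (Fin d) ℝ) (ε : ℝ)
    (hε : ε ∈ Set.Ioo (0:ℝ) 1) (hsym : M.IsHermitian) (hpd : M.PosDef)
    (hnorm : ‖M - 1‖ ≤ ε)
    (βs αs : ℝ)
    (hβs : βs = (ε / (1 + Real.sqrt (1 - ε ^ 2))) ^ 2)
    (hαs : αs = (1 - βs) * Real.sqrt (1 - ε ^ 2)) :
    ∀ μ ∈ spectrum ℝ M⁻¹, (1 - Real.sqrt (αs * μ)) ^ 2 ≤ βs := by
  obtain ⟨hε0, hε1⟩ := hε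
  intro μ hμ
  rcases Nat.eq_zero_or_pos d with hd | hd
  · subst hd
    rw [spectrum.of_subsingleton] at hμ
    exact absurd hμ (Set.notMem_empty μ)
  have : NeZero d := ⟨hd.ne'⟩
  -- μ ≠ 0 and μ⁻¹ ∈ spectrum M
  have hMu : IsUnit M := hpd.isUnit
  have hinv : ((hMu.unit⁻¹ : (Matrix (Fin d) (Fin d) ℝ)ˣ) : Matrix (Fin d) (Fin d) ℝ) = M⁻¹ := by
    rw [Matrix.coe_units_inv, hMu.unit_spec]
  have hμ0 : μ ≠ 0 := by
    rintro rfl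
    exact spectrum.zero_notMem ℝ (hMu.unit⁻¹).isUnit (by rwa [hinv])
  have hmem : μ⁻¹ ∈ spectrum ℝ M := by
    have h2 := (spectrum.inv_mem_iff (R := ℝ) (r := (Units.mk0 μ hμ0)⁻¹) (a := hMu.unit)).mpr
    simp only [inv_inv, Units.val_inv_eq_inv_val, Units.val_mk0, IsUnit.unit_spec, hinv] at h2
    exact h2 hμ
  -- bound the spectrum of M via the operator norm
  have hsub : μ⁻¹ - 1 ∈ spectrum ℝ (M - 1) := by
    have h1 : (1 : Matrix (Fin d) (Fin d) ℝ) = algebraMap ℝ _ 1 := by simp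
    rw [h1, ← spectrum.sub_singleton_eq]
    exact Set.sub_mem_sub hmem rfl
  have hbound : |μ⁻¹ - 1| ≤ ε := by
    have := spectrum.norm_le_norm_of_mem hsub
    rw [Real.norm_eq_abs] at this
    exact this.trans hnorm
  have hlam_lo : 1 - ε ≤ μ⁻¹ := by have := abs_le.mp hbound; linarith [this.1]
  have hlam_hi : μ⁻¹ ≤ 1 + ε := by have := abs_le.mp hbound; linarith [(abs_le.mp hbound).2]
  have hμpos : 0 < μ := by
    have : 0 < μ⁻¹ := by linarith
    exact inv_pos.mp this
  have hμinv : μ * μ⁻¹ = 1 := mul_inv_cancel₀ hμ0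
  -- set up `s` and `b`
  set s : ℝ := Real.sqrt (1 - ε ^ 2) with hsdef
  have hs2 : s ^ 2 = 1 - ε ^ 2 := Real.sq_sqrt (by nlinarith)
  have hs0 : 0 < s := Real.sqrt_pos.mpr (by nlinarith)
  set b : ℝ := ε / (1 + s) with hbdef
  have h1s : (0:ℝ) < 1 + s := by linarith
  have hb0 : 0 < b := div_pos hε0 h1s
  have hb1 : b < 1 := by
    rw [div_lt_one h1s]; linarith
  have hβb : βs = b ^ 2 := hβs
  have hαb : αs = (1 - b ^ 2) * s := by rw [hαs, hβb]
  have key1 : (1 - b ^ 2) * s = (1 + ε) * (1 - b) ^ 2 := by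
    rw [hbdef]
    field_simp
    linear_combination (1 + s - ε) * hs2
  have key2 : (1 - b ^ 2) * s = (1 - ε) * (1 + b) ^ 2 := by
    rw [hbdef]
    field_simp
    linear_combination (1 + s + ε) * hs2
  -- bounds on t = √(αs μ)
  have hαμ : 0 ≤ αs * μ := by
    have : 0 < 1 - b ^ 2 := by nlinarith
    rw [hαb]; positivity
  set t : ℝ := Real.sqrt (αs * μ) with htdef
  have ht0 : 0 ≤ t := Real.sqrt_nonneg _
  have ht2 : t ^ 2 = αs * μ := Real.sq_sqrt hαμ
  have hlow : (1 - b) ^ 2 ≤ t ^ 2 := by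
    have h1 : (1 + ε) * μ ≥ 1 := by
      calc (1:ℝ) = μ * μ⁻¹ := hμinv.symm
      _ ≤ μ * (1 + ε) := by
          exact mul_le_mul_of_nonneg_left hlam_hi hμpos.le
      _ = (1 + ε) * μ := by ring
    rw [ht2, hαb, key1]
    nlinarith [sq_nonneg (1 - b)]
  have hhigh : t ^ 2 ≤ (1 + b) ^ 2 := by
    have h1 : (1 - ε) * μ ≤ 1 := by
      calc (1 - ε) * μ = μ * (1 - ε) := by ring
      _ ≤ μ * μ⁻¹ := mul_le_mul_of_nonneg_left hlam_lo hμpos.le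
      _ = 1 := hμinv
    rw [ht2, hαb, key2]
    nlinarith [sq_nonneg (1 + b)]
  have htlo : 1 - b ≤ t := (pow_le_pow_iff_left₀ (by linarith) ht0 two_ne_zero).mp hlow
  have hthi : t ≤ 1 + b := (pow_le_pow_iff_left₀ ht0 (by linarith) two_ne_zero).mp hhigh
  rw [hβb]
  exact sq_le_sq' (by linarith) (by linarith)
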